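/- arXiv:1307.1165 — 2 statements merged into one kernel-verified Lean document; each statement's English description precedes it below -/
import Mathlib

section
/- Let p be an odd prime and F an imaginary quadratic field. If g ∈ GL_N(F) has order p, then p ≤ N+1 if p ≡ 1 (mod 4), and p ≤ 2N+1 otherwise. -/
open Polynomial Module IntermediateField

private lemma exists_conj_fixed {p : ℕ+} (hp : (p:ℕ).Prime) (hp4 : (p:ℕ) % 4 = 1)
    {K : Type*} [Field K] [CharZero K] [Algebra ℚ K] [FiniteDimensional ℚ K]
    [IsCyclotomicExtension {(p:ℕ)} ℚ K]
    (M : IntermediateField ℚ K) (hM : Module.finrank ℚ M = 2) :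
    ∃ φ : K →+* ℂ, ∀ x ∈ M, (starRingEnd ℂ) (φ x) = φ x := by
  classical
  haveI : Fact (Nat.Prime (p:ℕ)) := ⟨hp⟩
  haveI : NeZero ((p : ℕ) : K) := ⟨Nat.cast_ne_zero.mpr hp.pos.ne'⟩
  haveI : IsGalois ℚ K := IsCyclotomicExtension.isGalois {(p:ℕ)} ℚ K
  haveI : Algebra.IsAlgebraic ℚ K := Algebra.IsAlgebraic.of_finite ℚ K
  have hirr : Irreducible (cyclotomic (p:ℕ) ℚ) := cyclotomic.irreducible_rat p.pos
  set ζ : K := IsCyclotomicExtension.zeta (p:ℕ) ℚ K with hζdef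
  have hζ : IsPrimitiveRoot ζ (p:ℕ) := IsCyclotomicExtension.zeta_spec (p:ℕ) ℚ K
  -- the embedding
  let φ : K →ₐ[ℚ] ℂ := IsAlgClosed.lift
  let ψ : K →ₐ[ℚ] ℂ :=
    { toRingHom := (starRingEnd ℂ).comp φ.toRingHom
      commutes' := fun q => by simp }
  have hψ : ∀ x, ψ x = (starRingEnd ℂ) (φ x) := fun x => rfl
  -- ζ generates K
  have htop : (ℚ⟮ζ⟯ : IntermediateField ℚ K) = ⊤ := by
    have h1 : Algebra.adjoin ℚ ({ζ} : Set K) = ⊤ :=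
      IsCyclotomicExtension.adjoin_primitive_root_eq_top hζ
    have h2 := IntermediateField.adjoin_simple_toSubalgebra_of_isAlgebraic
      (IsIntegral.of_finite ℚ ζ).isAlgebraic
    apply IntermediateField.toSubalgebra_injective
    rw [h2, h1]; rfl
  -- abs of φ ζ is 1
  have hzpow : (φ ζ) ^ (p:ℕ) = 1 := by
    rw [← map_pow, hζ.pow_eq_one, map_one]
  have habs : ‖φ ζ‖ = 1 := by
    have := congrArg (‖·‖) hzpow
    rw [norm_pow, norm_one] at this
    exact (pow_left_inj₀ (by positivity) zero_le_one hp.pos.ne').mp (by simpa [one_pow] using this)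
  have hconj : (starRingEnd ℂ) (φ ζ) = (φ ζ)⁻¹ := (Complex.inv_eq_conj habs).symm
  have hψζ : ψ ζ = (φ ζ)⁻¹ := by rw [hψ, hconj]
  have hφr : φ.fieldRange = IntermediateField.adjoin ℚ {φ ζ} := by
    rw [φ.fieldRange_eq_map, ← htop, IntermediateField.adjoin_map, Set.image_singleton]
  have hψr : ψ.fieldRange = IntermediateField.adjoin ℚ {ψ ζ} := by
    rw [ψ.fieldRange_eq_map, ← htop, IntermediateField.adjoin_map, Set.image_singleton]
  have hrange : ψ.fieldRange = φ.fieldRange := by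
    rw [hφr, hψr]
    apply le_antisymm
    · rw [IntermediateField.adjoin_le_iff, Set.singleton_subset_iff, hψζ]
      exact inv_mem (IntermediateField.mem_adjoin_simple_self ℚ (φ ζ))
    · rw [IntermediateField.adjoin_le_iff, Set.singleton_subset_iff]
      have : φ ζ = (ψ ζ)⁻¹ := by rw [hψζ, inv_inv]
      rw [this]
      exact inv_mem (IntermediateField.mem_adjoin_simple_self ℚ (ψ ζ))
  -- construct σ
  let φ' : K ≃ₐ[ℚ] φ.fieldRange := AlgEquiv.ofInjectiveField φ
  let ψ' : K ≃ₐ[ℚ] φ.fieldRange :=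
    (AlgEquiv.ofInjectiveField ψ).trans (IntermediateField.equivOfEq hrange)
  let σ : K ≃ₐ[ℚ] K := ψ'.trans φ'.symm
  have hinjφ : Function.Injective φ := φ.toRingHom.injective
  have hσ : ∀ x, φ (σ x) = ψ x := by
    intro x
    have h1 : ∀ y : K, (φ' y : ℂ) = φ y := fun y => rfl
    have h2 : ∀ y : K, (ψ' y : ℂ) = ψ y := fun y => rfl
    have : φ (σ x) = (φ' (φ'.symm (ψ' x)) : ℂ) := rfl
    rw [this, AlgEquiv.apply_symm_apply, h2]
  have hσζ : σ ζ = ζ⁻¹ := by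
    apply hinjφ
    rw [hσ, hψζ, map_inv₀]
  -- identify σ with -1 ∈ (ZMod p)ˣ
  let e := IsCyclotomicExtension.autEquivPow K hirr
  have hζinv : ζ⁻¹ = ζ ^ ((p:ℕ) - 1) := by
    have h1 : ζ ^ ((p:ℕ) - 1) * ζ = 1 := by
      rw [← pow_succ, Nat.sub_add_cancel hp.pos, hζ.pow_eq_one]
    exact (eq_inv_of_mul_eq_one_left h1).symm
  have hspec : ζ ^ ((e σ : ZMod (p:ℕ))).val = σ ζ := hζ.autToPow_spec ℚ σ
  have hval : ((e σ : ZMod (p:ℕ))).val = (p:ℕ) - 1 := by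
    apply hζ.pow_inj (ZMod.val_lt _) (Nat.sub_lt hp.pos one_pos)
    rw [hspec, hσζ, hζinv]
  have heσ : e σ = -1 := by
    apply Units.ext
    have h1 : ((((e σ : ZMod (p:ℕ))).val : ℕ) : ZMod (p:ℕ)) = (e σ : ZMod (p:ℕ)) := by
      rw [ZMod.natCast_val, ZMod.cast_id]
    rw [Units.val_neg, Units.val_one, ← h1, hval, Nat.cast_sub hp.pos, ZMod.natCast_self,
      Nat.cast_one, zero_sub]
  -- -1 is a square in (ZMod p)ˣ
  obtain ⟨r, hr⟩ : IsSquare (-1 : ZMod (p:ℕ)) :=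
    ZMod.exists_sq_eq_neg_one_iff.mpr (by omega)
  have hrne : r ≠ 0 := by
    intro h
    rw [h, mul_zero] at hr
    exact one_ne_zero (neg_eq_zero.mp hr)
  let ru : (ZMod (p:ℕ))ˣ := (Ne.isUnit hrne).unit
  have hru : ru * ru = -1 := by
    apply Units.ext
    have : (ru : ZMod (p:ℕ)) = r := rfl
    simp [this, ← hr]
  -- the fixing subgroup of M has index 2
  let H := M.fixingSubgroup
  haveI : FiniteDimensional ↥M K := FiniteDimensional.right ℚ ↥M K
  have hcardH : Nat.card H = finrank ↥M K := by
    exact IsGalois.card_fixingSubgroup_eq_finrank (K := M)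
  have hcardG : Nat.card (K ≃ₐ[ℚ] K) = finrank ℚ K := by
    exact IsGalois.card_aut_eq_finrank ℚ K
  have hmul : finrank ℚ ↥M * finrank ↥M K = finrank ℚ K := finrank_mul_finrank ℚ ↥M K
  have hindex : H.index = 2 := by
    have h1 : H.index * Nat.card H = Nat.card (K ≃ₐ[ℚ] K) := Subgroup.index_mul_card H
    rw [hcardH, hcardG, ← hmul, hM] at h1
    have hpos : 0 < finrank ↥M K := finrank_pos
    exact Nat.eq_of_mul_eq_mul_right hpos (by linarith)
  have hσH : σ ∈ H := by
    have : σ = (e.symm ru) ^ 2 := by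
      have h1 : e σ = ru ^ 2 := by rw [heσ, ← hru, sq]
      have := congrArg e.symm h1
      rwa [e.symm_apply_apply, map_pow] at this
    rw [this]
    exact Subgroup.sq_mem_of_index_two hindex _
  refine ⟨φ.toRingHom, fun x hx => ?_⟩
  have hfix : σ x = x := by
    have := (IntermediateField.mem_fixingSubgroup_iff M σ).mp hσH x hx
    exact this
  show (starRingEnd ℂ) (φ x) = φ x
  rw [← hψ x, ← hσ x, hfix]



/-- Let `p` be an odd prime and `F` an imaginary quadratic field.  If `g ∈ GL_N(F)` has
order `p`, then `p ≤ N + 1` if `p ≡ 1 (mod 4)`, and `p ≤ 2N + 1` otherwise. -/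
theorem order_bound_GL_imaginary_quadratic
    (F : Type*) [Field F] [NumberField F] (h2 : Module.finrank ℚ F = 2)
    (himag : ∀ φ : F →+* ℝ, False)
    (N : ℕ) (hN : 0 < N) (p : ℕ) (hp : p.Prime) (hodd : Odd p)
    (g : GL (Fin N) F) (hg : orderOf g = p) :
    (p % 4 = 1 → p ≤ N + 1) ∧ (p % 4 ≠ 1 → p ≤ 2 * N + 1) := by
  classical
  haveI : Fact (Nat.Prime p) := ⟨hp⟩
  set A : Matrix (Fin N) (Fin N) F := (g : Matrix (Fin N) (Fin N) F) with hA
  have hApow : A ^ p = 1 := by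
    have h1 : g ^ p = 1 := by rw [← hg]; exact pow_orderOf_eq_one g
    have h2 := congrArg Units.val h1
    simpa using h2
  have hint : IsIntegral F A := IsIntegral.of_finite F A
  set q := minpoly F A with hqdef
  have hq0 : q ≠ 0 := minpoly.ne_zero hint
  have hqdvd : q ∣ (X : F[X]) ^ p - 1 := minpoly.dvd F A (by simp [hApow])
  have hqdeg : q.natDegree ≤ N := by
    have h1 : q ∣ A.charpoly := A.minpoly_dvd_charpoly
    have h3 := Polynomial.natDegree_le_of_dvd h1 A.charpoly_monic.ne_zero
    simpa using h3
  have hAne : A ≠ 1 := by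
    intro h
    have : g = 1 := Units.ext h
    rw [this, orderOf_one] at hg
    exact hp.one_lt.ne' hg.symm
  have hqnd : ¬ q ∣ (X - 1 : F[X]) := by
    intro h
    obtain ⟨c, hc⟩ := h
    have h1 : aeval A ((X : F[X]) - 1) = 0 := by
      rw [hc, map_mul, hqdef, minpoly.aeval, zero_mul]
    have h2 : A - 1 = 0 := by simpa using h1
    exact hAne (by rwa [sub_eq_zero] at h2)
  set Φ := cyclotomic p F with hΦdef
  have hfac : Φ * ((X : F[X]) - 1) = X ^ p - 1 := cyclotomic_prime_mul_X_sub_one F p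
  obtain ⟨f, hfirr, hfq, hfΦ⟩ : ∃ f : F[X], Irreducible f ∧ f ∣ q ∧ f ∣ Φ := by
    by_contra hcon
    push_neg at hcon
    have hcop : IsCoprime q Φ := by
      rw [← EuclideanDomain.gcd_isUnit_iff]
      by_contra hu
      have hg0 : EuclideanDomain.gcd q Φ ≠ 0 := fun h0 =>
        hq0 (EuclideanDomain.gcd_eq_zero_iff.mp h0).1
      obtain ⟨f, hf1, hf2⟩ := WfDvdMonoid.exists_irreducible_factor hu hg0
      exact hcon f hf1 (hf2.trans (EuclideanDomain.gcd_dvd_left _ _))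
        (hf2.trans (EuclideanDomain.gcd_dvd_right _ _))
    have h1 : q ∣ Φ * ((X : F[X]) - 1) := by rw [hfac]; exact hqdvd
    exact hqnd (hcop.dvd_of_dvd_mul_left h1)
  haveI hfact : Fact (Irreducible f) := ⟨hfirr⟩
  set K := AdjoinRoot f with hKdef
  haveI : CharZero K := charZero_of_injective_algebraMap (algebraMap F K).injective
  have hf0 : f ≠ 0 := hfirr.ne_zero
  have hfdeg : f.natDegree ≠ 0 := hfirr.natDegree_pos.ne'
  have hfrk : finrank F K = f.natDegree := by
    rw [(AdjoinRoot.powerBasis hf0).finrank, AdjoinRoot.powerBasis_dim]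
  haveI : FiniteDimensional F K := PowerBasis.finite (AdjoinRoot.powerBasis hf0)
  set ζ : K := AdjoinRoot.root f with hζdef
  have hroot : aeval ζ Φ = 0 := by
    obtain ⟨c, hc⟩ := hfΦ
    have h1 : aeval ζ f = 0 := by
      rw [aeval_def, AdjoinRoot.algebraMap_eq]
      exact AdjoinRoot.eval₂_root f
    rw [hc, map_mul, h1, zero_mul]
  haveI : NeZero ((p : ℕ) : K) := ⟨Nat.cast_ne_zero.mpr hp.pos.ne'⟩
  have hζ : IsPrimitiveRoot ζ p := by
    rw [← Polynomial.isRoot_cyclotomic_iff (R := K) (n := p)]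
    have h1 : cyclotomic p K = Φ.map (algebraMap F K) := (map_cyclotomic p (algebraMap F K)).symm
    rw [IsRoot.def, h1, eval_map, ← aeval_def, hroot]
  haveI : IsScalarTower ℚ F K := IsScalarTower.of_algebraMap_eq fun r =>
    (RingHom.congr_fun (Subsingleton.elim ((algebraMap F K).comp (algebraMap ℚ F)) (algebraMap ℚ K)) r).symm
  haveI : FiniteDimensional ℚ K := FiniteDimensional.trans ℚ F K
  have hKQ : finrank ℚ K = 2 * f.natDegree := by
    rw [← finrank_mul_finrank ℚ F K, h2, hfrk]
  have hζint : IsIntegral ℚ ζ := IsIntegral.of_finite ℚ ζ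
  have hEfr : finrank ℚ ℚ⟮ζ⟯ = p - 1 := by
    rw [IntermediateField.adjoin.finrank hζint, ← cyclotomic_eq_minpoly_rat hζ hp.pos,
      natDegree_cyclotomic, Nat.totient_prime hp]
  have hEK : finrank ℚ ℚ⟮ζ⟯ * finrank ℚ⟮ζ⟯ K = finrank ℚ K := finrank_mul_finrank ℚ ℚ⟮ζ⟯ K
  have hdvd : (p - 1) ∣ 2 * f.natDegree := ⟨finrank ℚ⟮ζ⟯ K, by rw [← hKQ, ← hEK, hEfr]⟩
  have hle : p - 1 ≤ 2 * f.natDegree := Nat.le_of_dvd (by omega) hdvd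
  have hdN : f.natDegree ≤ N := le_trans (natDegree_le_of_dvd hfq hq0) hqdeg
  constructor
  · intro hp4
    by_contra hcon
    push_neg at hcon
    have h2d : 2 * f.natDegree = p - 1 := by
      obtain ⟨k, hk⟩ := hdvd
      rcases Nat.lt_or_ge k 2 with hk2 | hk2
      · interval_cases k <;> omega
      · have := Nat.mul_le_mul_left (p - 1) hk2
        omega
    have hEK1 : finrank ℚ⟮ζ⟯ K = 1 := by
      have h1 := hEK
      rw [hEfr, hKQ, h2d] at h1
      have hpos : 0 < p - 1 := by omega
      exact Nat.eq_of_mul_eq_mul_left hpos (by rw [mul_one]; exact h1)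
    have htop : (ℚ⟮ζ⟯ : IntermediateField ℚ K) = ⊤ := by
      apply IntermediateField.eq_of_le_of_finrank_eq le_top
      rw [hEfr, IntermediateField.finrank_top', hKQ]
      omega
    -- K is a cyclotomic extension of ℚ
    haveI hcyc : IsCyclotomicExtension {p} ℚ K := by
      rw [IsCyclotomicExtension.iff_adjoin_eq_top]
      refine ⟨fun n hn _ => ?_, ?_⟩
      · rw [Set.mem_singleton_iff] at hn
        subst hn
        exact ⟨ζ, hζ⟩
      · have hadj : Algebra.adjoin ℚ ({ζ} : Set K) = ⊤ := by
          have h1 := IntermediateField.adjoin_simple_toSubalgebra_of_isAlgebraic hζint.isAlgebraic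
          rw [htop] at h1
          rw [← h1]
          rfl
        rw [eq_top_iff, ← hadj]
        apply Algebra.adjoin_mono
        intro x hx
        rw [Set.mem_singleton_iff] at hx
        subst hx
        exact ⟨p, Set.mem_singleton _, hp.ne_zero, hζ.pow_eq_one⟩
    -- the image of F inside K
    set ι := IsScalarTower.toAlgHom ℚ F K with hιdef
    have hMfr : finrank ℚ ι.fieldRange = 2 := by
      rw [← h2]
      exact (LinearEquiv.finrank_eq (AlgEquiv.ofInjectiveField ι).toLinearEquiv).symm
    haveI : IsCyclotomicExtension {PNat.val ⟨p, hp.pos⟩} ℚ K := hcyc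
    obtain ⟨φ, hφ⟩ := exists_conj_fixed (p := ⟨p, hp.pos⟩) (K := K) hp hp4 ι.fieldRange hMfr
    set c : F →+* ℂ := φ.comp (algebraMap F K) with hcdef
    have him : ∀ x : F, (c x).im = 0 := by
      intro x
      have h1 : algebraMap F K x ∈ ι.fieldRange := ⟨x, rfl⟩
      have h2 := hφ (algebraMap F K x) h1
      have h3 : (starRingEnd ℂ) (c x) = c x := h2
      exact Complex.conj_eq_iff_im.mp h3
    exact himag
      { toFun := fun x => (c x).re
        map_one' := by simp
        map_mul' := fun x y => by
          simp [map_mul, Complex.mul_re, him]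
        map_zero' := by simp
        map_add' := fun x y => by
          simp [map_add, Complex.add_re] }
  · omega
end

section
/- If g ∈ GL_4(O_F) has prime order q, where O_F is the ring of integers of an imaginary quadratic field F, then q ∈ {2,3,5,7} if F = ℚ(√-7), and q ∈ {2,3,5} otherwise. -/
open NumberField Polynomial IntermediateField

theorem bound_lemma (F : Type*) [Field F] [NumberField F] (h2 : Module.finrank ℚ F = 2)
    {q : ℕ} (hq : 0 < q) (ξ : AlgebraicClosure F) (hξ : IsPrimitiveRoot ξ q) :
    Nat.totient q ≤ 2 * (minpoly F ξ).natDegree := by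
  have hint : IsIntegral F ξ := (IsAlgClosure.isAlgebraic.isAlgebraic ξ).isIntegral
  have hintQ : IsIntegral ℚ ξ := by
    have h1 : Algebra.IsAlgebraic ℚ F := Algebra.IsAlgebraic.of_finite ℚ F
    have : Algebra.IsAlgebraic ℚ (AlgebraicClosure F) := Algebra.IsAlgebraic.trans ℚ F (AlgebraicClosure F)
    exact (this.isAlgebraic ξ).isIntegral
  have hdQ : Module.finrank ℚ ℚ⟮ξ⟯ = Nat.totient q := by
    rw [IntermediateField.adjoin.finrank hintQ, ← cyclotomic_eq_minpoly_rat hξ hq,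
      natDegree_cyclotomic]
  have hFD : FiniteDimensional F F⟮ξ⟯ := IntermediateField.adjoin.finiteDimensional hint
  have hdF : Module.finrank ℚ (F⟮ξ⟯.restrictScalars ℚ) = 2 * (minpoly F ξ).natDegree := by
    have h3 := Module.finrank_mul_finrank ℚ F F⟮ξ⟯
    rw [h2, IntermediateField.adjoin.finrank hint] at h3
    exact h3.symm
  have hle : ℚ⟮ξ⟯ ≤ F⟮ξ⟯.restrictScalars ℚ := by
    rw [IntermediateField.adjoin_simple_le_iff]
    exact IntermediateField.mem_adjoin_simple_self F ξ
  have hFD2 : FiniteDimensional ℚ (F⟮ξ⟯.restrictScalars ℚ) :=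
    FiniteDimensional.trans ℚ F F⟮ξ⟯
  have hmono : Module.finrank ℚ ℚ⟮ξ⟯ ≤ Module.finrank ℚ (F⟮ξ⟯.restrictScalars ℚ) := by
    have : FiniteDimensional ℚ (F⟮ξ⟯.restrictScalars ℚ).toSubalgebra.toSubmodule := hFD2
    exact Submodule.finrank_mono (s := (ℚ⟮ξ⟯.toSubalgebra.toSubmodule))
      (t := ((F⟮ξ⟯.restrictScalars ℚ).toSubalgebra.toSubmodule)) hle
  omega

theorem extract (F : Type*) [Field F] [NumberField F]
    (g : GL (Fin 4) (𝓞 F)) (q : ℕ) (hq : q.Prime) (hg : orderOf g = q) :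
    ∃ ζ : AlgebraicClosure F, IsPrimitiveRoot ζ q ∧ (minpoly F ζ).natDegree ≤ 4 := by
  classical
  set K := AlgebraicClosure F with hK
  let A : Matrix (Fin 4) (Fin 4) F := (algebraMap (𝓞 F) F).mapMatrix (g : Matrix (Fin 4) (Fin 4) (𝓞 F))
  have hApow : A ^ q = 1 := by
    have h1 : (g : Matrix (Fin 4) (Fin 4) (𝓞 F)) ^ q = 1 := by
      have := pow_orderOf_eq_one g
      rw [hg] at this
      have := congrArg (Units.val) this
      simpa [Units.val_pow_eq_pow_val] using this
    show (algebraMap (𝓞 F) F).mapMatrix _ ^ q = 1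
    rw [← map_pow, h1, map_one]
  have hAne : A ≠ 1 := by
    intro hA1
    have hgm : (g : Matrix (Fin 4) (Fin 4) (𝓞 F)) = 1 := by
      ext i j
      show algebraMap (𝓞 F) F ((g : Matrix (Fin 4) (Fin 4) (𝓞 F)) i j)
        = algebraMap (𝓞 F) F ((1 : Matrix (Fin 4) (Fin 4) (𝓞 F)) i j)
      have h : A i j = (1 : Matrix (Fin 4) (Fin 4) F) i j := by rw [hA1]
      simp only [A, RingHom.mapMatrix_apply, Matrix.map_apply] at h
      rw [h]
      by_cases hij : i = j <;> simp [hij, Matrix.one_apply]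
    have hg1 : g = 1 := Units.ext hgm
    rw [hg1, orderOf_one] at hg
    exact hq.ne_one hg.symm
  have hAint : IsIntegral F A := IsIntegral.of_finite F A
  have hdvd1 : minpoly F A ∣ X ^ q - 1 := by
    apply minpoly.dvd
    simp [hApow]
  have hdeg4 : (minpoly F A).natDegree ≤ 4 := by
    have h := Matrix.minpoly_dvd_charpoly A
    have := natDegree_le_of_dvd h A.charpoly_monic.ne_zero
    simpa [Matrix.charpoly_natDegree_eq_dim] using this
  -- pass to K
  let mp : K[X] := (minpoly F A).map (algebraMap F K)
  have hmpmonic : mp.Monic := (minpoly.monic hAint).map _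
  have hmpdvd : mp ∣ X ^ q - 1 := by
    have := Polynomial.map_dvd (algebraMap F K) hdvd1
    simpa [Polynomial.map_pow] using this
  have hsepbig : Separable (X ^ q - 1 : K[X]) := by
    have : ((q : K)) ≠ 0 := by
      exact_mod_cast Nat.cast_ne_zero.mpr hq.ne_zero
    simpa using Polynomial.separable_X_pow_sub_C (1 : K) this one_ne_zero
  have hmpsep : Separable mp := hsepbig.of_dvd hmpdvd
  have hnodup := Polynomial.nodup_roots hmpsep
  have hsplits : mp.Splits := IsAlgClosed.splits _
  have hdegpos : 0 < mp.natDegree := by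
    rw [Polynomial.natDegree_map]
    exact minpoly.natDegree_pos hAint
  obtain ⟨ζ, hζroot, hζne⟩ : ∃ ζ : K, mp.IsRoot ζ ∧ ζ ≠ 1 := by
    by_contra hcon
    push_neg at hcon
    have hcard : Multiset.card mp.roots = mp.natDegree := by
      have := hsplits.natDegree_eq_card_roots
      simpa using this.symm
    have hsub : mp.roots.toFinset ⊆ {1} := by
      intro x hx
      simp only [Multiset.mem_toFinset, mem_roots hmpmonic.ne_zero] at hx
      simp [hcon x hx]
    have hc1 : mp.roots.toFinset.card ≤ 1 := by
      calc mp.roots.toFinset.card ≤ ({1} : Finset K).card := Finset.card_le_card hsub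
      _ = 1 := by simp
    rw [Multiset.toFinset_card_of_nodup hnodup, hcard] at hc1
    have hdeg1 : (minpoly F A).natDegree = 1 := by
      simp only [mp, Polynomial.natDegree_map] at hdegpos hc1; omega
    have hroot1 : mp.IsRoot 1 := by
      obtain ⟨x, hx⟩ := Multiset.card_pos_iff_exists_mem.mp (by rw [hcard]; exact hdegpos)
      have hrx := (mem_roots hmpmonic.ne_zero).mp hx
      have := hcon x hrx
      rw [← this]
      exact hrx
    have hc : minpoly F A = X + C ((minpoly F A).coeff 0) := (minpoly.monic hAint).eq_X_add_C hdeg1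
    set c := (minpoly F A).coeff 0 with hcdef
    have hcval : c = -1 := by
      have heval : Polynomial.eval (1 : K) mp = 0 := hroot1
      rw [show mp = (minpoly F A).map (algebraMap F K) from rfl, hc] at heval
      simp only [Polynomial.map_add, Polynomial.map_X, Polynomial.map_C, Polynomial.eval_add,
        Polynomial.eval_X, Polynomial.eval_C] at heval
      have h2 : algebraMap F K c = algebraMap F K (-1) := by
        rw [map_neg, map_one]
        linear_combination heval
      exact (algebraMap F K).injective h2
    have hA1 : A = 1 := by
      have haev := minpoly.aeval F A
      rw [hc, hcval] at haev
      simp only [map_neg, map_one, Polynomial.aeval_add, Polynomial.aeval_X,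
        Polynomial.aeval_C, map_neg, map_one] at haev
      have h3 : A + (-1 : Matrix (Fin 4) (Fin 4) F) = 0 := by simpa using haev
      have h4 : A = -(-1 : Matrix (Fin 4) (Fin 4) F) := by
        rw [eq_neg_iff_add_eq_zero]; exact h3
      simpa using h4
    exact hAne hA1
  have hζq : ζ ^ q = 1 := by
    obtain ⟨c, hc⟩ := hmpdvd
    have : Polynomial.eval ζ (X ^ q - 1 : K[X]) = 0 := by
      rw [hc, Polynomial.eval_mul, hζroot, zero_mul]
    simpa [sub_eq_zero] using this
  have hord : orderOf ζ = q := by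
    have h1 : orderOf ζ ∣ q := orderOf_dvd_of_pow_eq_one hζq
    rcases (Nat.Prime.eq_one_or_self_of_dvd hq _ h1) with h | h
    · exact absurd (orderOf_eq_one_iff.mp h) hζne
    · exact h
  refine ⟨ζ, ?_, ?_⟩
  · have := IsPrimitiveRoot.orderOf ζ
    rwa [hord] at this
  · have hdvd : minpoly F ζ ∣ minpoly F A := by
      apply minpoly.dvd
      rw [Polynomial.aeval_def, ← Polynomial.eval_map]
      exact hζroot
    exact le_trans (natDegree_le_of_dvd hdvd (minpoly.ne_zero hAint)) hdeg4

theorem seven_lemma (F : Type*) [Field F] [NumberField F] (h2 : Module.finrank ℚ F = 2)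
    (ζ : AlgebraicClosure F) (hζ : IsPrimitiveRoot ζ 7) (hd4 : (minpoly F ζ).natDegree ≤ 4) :
    ∃ x : F, x ^ 2 = -7 := by
  classical
  let K : Type _ := AlgebraicClosure F
  letI : NeZero ((7 : ℕ) : K) := ⟨by exact_mod_cast (by norm_num : ((7:ℕ):ℚ) ≠ 0)⟩
  have halg : Algebra.IsAlgebraic F K := IsAlgClosure.isAlgebraic
  have hbound : ∀ ξ : K, IsPrimitiveRoot ξ 7 → 3 ≤ (minpoly F ξ).natDegree := by
    intro ξ hξ
    have := bound_lemma F h2 (by norm_num) ξ hξ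
    rw [show Nat.totient 7 = 6 by decide] at this
    omega
  set m := minpoly F ζ with hm
  have hζint : IsIntegral F ζ := (halg.isAlgebraic ζ).isIntegral
  -- m divides cyclotomic 7 F
  have hmdvd : m ∣ cyclotomic 7 F := by
    have h1 := minpoly.dvd_map_of_isScalarTower ℚ F ζ
    rwa [← cyclotomic_eq_minpoly_rat hζ (by norm_num), map_cyclotomic] at h1
  -- degree of m is 3
  have hdeg3 : m.natDegree = 3 := by
    rcases Nat.lt_or_ge m.natDegree 4 with h | h
    · have h5 := hbound ζ hζ; rw [← hm] at h5; omega
    · exfalso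
      have hdeg4' : m.natDegree = 4 := le_antisymm hd4 h
      obtain ⟨c, hc⟩ := hmdvd
      have hcyc0 : (cyclotomic 7 F) ≠ 0 := cyclotomic_ne_zero 7 F
      have hc0 : c ≠ 0 := by rintro rfl; simp [hc] at hcyc0
      have hm0 : m ≠ 0 := minpoly.ne_zero hζint
      have hdegc : c.natDegree = 2 := by
        have := natDegree_mul hm0 hc0
        rw [← hc, natDegree_cyclotomic, hdeg4'] at this
        rw [show Nat.totient 7 = 6 by decide] at this
        omega
      -- c has a root in K
      obtain ⟨ξ, hξroot⟩ : ∃ ξ : K, (c.map (algebraMap F K)).IsRoot ξ := by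
        apply IsAlgClosed.exists_root
        rw [degree_map, degree_eq_natDegree hc0, hdegc]
        norm_num
      have hξcyc : IsPrimitiveRoot ξ 7 := by
        rw [← isRoot_cyclotomic_iff (n := 7) (R := K)]
        rw [← map_cyclotomic 7 (algebraMap F K), hc, Polynomial.map_mul]
        simp only [IsRoot.def, eval_mul]
        rw [hξroot]
        ring
      have h3 := hbound ξ hξcyc
      have : minpoly F ξ ∣ c := by
        apply minpoly.dvd
        rw [Polynomial.aeval_def, ← Polynomial.eval_map]
        exact hξroot
      have := natDegree_le_of_dvd this hc0
      omega
  -- work with roots of mm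
  set φ := algebraMap F K with hφ
  set mm := m.map φ with hmm
  have hmmonic : m.Monic := minpoly.monic hζint
  have hmmmonic : mm.Monic := hmmonic.map _
  have hmsep : mm.Separable := ((minpoly.irreducible hζint).separable).map
  have hnodup : mm.roots.Nodup := Polynomial.nodup_roots hmsep
  have hsplits : mm.Splits := IsAlgClosed.splits _
  have hdegmm : mm.natDegree = 3 := by rw [hmm, natDegree_map]; exact hdeg3
  have hcard : Multiset.card mm.roots = 3 := by
    have h := hsplits.natDegree_eq_card_roots
    omega
  have hmem_iff : ∀ x : K, x ∈ mm.roots ↔ (Polynomial.aeval x) m = 0 := by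
    intro x
    rw [mem_roots hmmmonic.ne_zero, IsRoot.def, hmm, eval_map, hφ, ← Polynomial.aeval_def]

  have hmmdvdcyc : mm ∣ cyclotomic 7 K := by
    rw [← map_cyclotomic 7 φ]
    exact Polynomial.map_dvd φ hmdvd
  -- every root of mm is a power of ζ with exponent in [1,6]
  have hroots_pow : ∀ x ∈ mm.roots, ∃ k ∈ Finset.Icc 1 6, x = ζ ^ k := by
    intro x hx
    have hxroot : (cyclotomic 7 K).IsRoot x := by
      obtain ⟨u, hu⟩ := hmmdvdcyc
      rw [hu]
      simp only [IsRoot.def, eval_mul]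
      rw [((mem_roots hmmmonic.ne_zero).mp hx)]
      ring
    have hxprim : IsPrimitiveRoot x 7 := (isRoot_cyclotomic_iff).mp hxroot
    obtain ⟨i, hi7, hix⟩ := hζ.eq_pow_of_pow_eq_one (hxprim.pow_eq_one)
    have hine : i ≠ 0 := by
      rintro rfl
      simp only [pow_zero] at hix
      exact hxprim.ne_one (by norm_num) hix.symm
    exact ⟨i, Finset.mem_Icc.mpr ⟨Nat.one_le_iff_ne_zero.mpr hine, by omega⟩, hix.symm⟩
  -- multiplicative closure
  have hmul : ∀ a b : ℕ, (ζ ^ a) ∈ mm.roots → (ζ ^ b) ∈ mm.roots → (ζ ^ (a * b)) ∈ mm.roots := by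
    intro a b ha hb
    have haev : (Polynomial.aeval (ζ ^ a)) (minpoly F ζ) = 0 := by
      rw [← hm]; exact (hmem_iff _).mp ha
    obtain ⟨σ, hσ⟩ := minpoly.exists_algEquiv_of_root' (halg.isAlgebraic ζ) haev
    have hb' : (Polynomial.aeval (ζ ^ b)) m = 0 := (hmem_iff _).mp hb
    have hkey : (Polynomial.aeval (σ (ζ ^ b))) m = 0 := by
      have h := Polynomial.aeval_algHom_apply (σ : K →ₐ[F] K) (ζ ^ b) m
      rw [show ((σ : K →ₐ[F] K) (ζ ^ b)) = σ (ζ ^ b) from rfl] at h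
      rw [h, hb', map_zero]
    rw [map_pow, hσ, ← pow_mul] at hkey
    exact (hmem_iff _).mpr hkey
  have hord : orderOf ζ = 7 := (hζ.eq_orderOf).symm
  have hmod : ∀ a : ℕ, ζ ^ (a % 7) = ζ ^ a := by
    intro a
    conv_rhs => rw [← Nat.div_add_mod a 7]
    rw [pow_add, pow_mul, hζ.pow_eq_one, one_pow, one_mul]
  -- the exponent set
  set E := (Finset.Icc 1 6).filter (fun k => (ζ ^ k) ∈ mm.roots) with hE
  have hEmem : ∀ k, k ∈ E ↔ (k ∈ Finset.Icc 1 6 ∧ (ζ ^ k) ∈ mm.roots) := by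
    intro k; simp [hE]
  have hζroot : ζ ∈ mm.roots := (hmem_iff ζ).mpr (by rw [hm]; exact minpoly.aeval F ζ)
  have h1E : 1 ∈ E := by
    rw [hEmem]
    refine ⟨by decide, by rwa [pow_one]⟩
  have hmulE : ∀ a b, a ∈ E → b ∈ E → (a * b) % 7 ∈ E := by
    intro a b ha hb
    rw [hEmem] at ha hb ⊢
    obtain ⟨ha6, haroot⟩ := ha
    obtain ⟨hb6, hbroot⟩ := hb
    simp only [Finset.mem_Icc] at ha6 hb6
    have hnd : ¬ (7 ∣ a * b) := by
      intro hdvd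
      rcases (Nat.Prime.dvd_mul (by norm_num)).mp hdvd with h | h
      · omega
      · omega
    constructor
    · rw [Finset.mem_Icc]
      have := Nat.mod_lt (a*b) (show 0 < 7 by norm_num)
      have : (a*b) % 7 ≠ 0 := fun h => hnd (Nat.dvd_of_mod_eq_zero h)
      omega
    · rw [hmod]
      exact hmul a b haroot hbroot
  -- E has card 3
  have hEcard : E.card = 3 := by
    have himg : E.image (fun k => ζ ^ k) = mm.roots.toFinset := by
      apply Finset.Subset.antisymm
      · intro x hx
        simp only [Finset.mem_image] at hx
        obtain ⟨k, hk, rfl⟩ := hx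
        rw [hEmem] at hk
        simp only [Multiset.mem_toFinset]
        exact hk.2
      · intro x hx
        simp only [Multiset.mem_toFinset] at hx
        obtain ⟨k, hk, rfl⟩ := hroots_pow x hx
        simp only [Finset.mem_image]
        exact ⟨k, (hEmem k).mpr ⟨hk, hx⟩, rfl⟩
    have hinj : Set.InjOn (fun k => ζ ^ k) E := by
      intro i hi j hj hij
      have hi' : i ∈ E := hi
      have hj' : j ∈ E := hj
      rw [hEmem] at hi' hj'
      replace hi := hi'; replace hj := hj' 
      have hi6 := Finset.mem_Icc.mp hi.1
      have hj6 := Finset.mem_Icc.mp hj.1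
      exact hζ.pow_inj (by omega) (by omega) hij
    rw [← Finset.card_image_of_injOn hinj, himg, Multiset.toFinset_card_of_nodup hnodup, hcard]
  -- 2 and 4 are in E
  have h24 : 2 ∈ E ∧ 4 ∈ E := by
    by_cases h4 : 4 ∈ E
    · refine ⟨?_, h4⟩
      have := hmulE 4 4 h4 h4
      norm_num at this
      exact this
    by_cases h2' : 2 ∈ E
    · exact absurd (by have := hmulE 2 2 h2' h2'; norm_num at this; exact this) h4
    · exfalso
      have h3 : 3 ∉ E := by
        intro h3
        have := hmulE 3 3 h3 h3
        norm_num at this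
        exact h2' this
      have hsub : E ⊆ ({1, 5, 6} : Finset ℕ) := by
        intro k hk
        have hk' := hk
        rw [hEmem] at hk'
        have h6 := Finset.mem_Icc.mp hk'.1
        have : k ≠ 2 := fun h => h2' (h ▸ hk)
        have : k ≠ 3 := fun h => h3 (h ▸ hk)
        have : k ≠ 4 := fun h => h4 (h ▸ hk)
        simp only [Finset.mem_insert, Finset.mem_singleton]
        omega
      have hEeq : E = ({1, 5, 6} : Finset ℕ) := by
        apply Finset.eq_of_subset_of_card_le hsub
        rw [hEcard]
        decide
      have h5 : 5 ∈ E := by rw [hEeq]; decide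
      have h6' : 6 ∈ E := by rw [hEeq]; decide
      have := hmulE 5 6 h5 h6'
      norm_num at this
      exact h2' this
  obtain ⟨h2E, h4E⟩ := h24
  have hζ2 : ζ ^ 2 ∈ mm.roots := ((hEmem 2).mp h2E).2
  have hζ4 : ζ ^ 4 ∈ mm.roots := ((hEmem 4).mp h4E).2
  -- roots multiset is exactly {ζ, ζ^2, ζ^4}
  have hne12 : ζ ≠ ζ ^ 2 := by
    intro h
    have := hζ.pow_inj (show 1 < 7 by norm_num) (show 2 < 7 by norm_num) (by rw [pow_one]; exact h)
    omega
  have hne14 : ζ ≠ ζ ^ 4 := by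
    intro h
    have := hζ.pow_inj (show 1 < 7 by norm_num) (show 4 < 7 by norm_num) (by rw [pow_one]; exact h)
    omega
  have hne24 : ζ ^ 2 ≠ ζ ^ 4 := by
    intro h
    have := hζ.pow_inj (show 2 < 7 by norm_num) (show 4 < 7 by norm_num) h
    omega
  have hMle : ({ζ, ζ^2, ζ^4} : Multiset K) ≤ mm.roots := by
    rw [Multiset.le_iff_subset (by simp [hne12, hne14, hne24] :
      ({ζ, ζ^2, ζ^4} : Multiset K).Nodup)]
    intro x hx
    simp only [Multiset.insert_eq_cons, Multiset.mem_cons, Multiset.mem_singleton] at hx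
    rcases hx with rfl | rfl | rfl
    · exact hζroot
    · exact hζ2
    · exact hζ4
  have hMeq : mm.roots = ({ζ, ζ^2, ζ^4} : Multiset K) :=
    (Multiset.eq_of_le_of_card_le hMle (by simp [hcard])).symm
  have hrootsum : mm.roots.sum = ζ + ζ^2 + ζ^4 := by
    rw [hMeq]
    simp only [Multiset.insert_eq_cons, Multiset.sum_cons, Multiset.sum_singleton]
    ring
  -- relate to nextCoeff
  have hnext : φ m.nextCoeff = -(ζ + ζ^2 + ζ^4) := by
    have := hsplits.nextCoeff_eq_neg_sum_roots_of_monic hmmmonic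
    rw [hrootsum] at this
    rw [← Polynomial.nextCoeff_map (φ.injective)]
    rw [this]
  -- final computation
  refine ⟨-(2 * m.nextCoeff) + 1, ?_⟩
  apply φ.injective
  have h7 : ζ ^ 7 = 1 := hζ.pow_eq_one
  have hζn1 : ζ ≠ 1 := hζ.ne_one (by norm_num)
  have hsumall : 1 + ζ + ζ^2 + ζ^3 + ζ^4 + ζ^5 + ζ^6 = 0 := by
    have hmul0 : (ζ - 1) * (1 + ζ + ζ^2 + ζ^3 + ζ^4 + ζ^5 + ζ^6) = 0 := by
      linear_combination h7
    rcases mul_eq_zero.mp hmul0 with h | h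
    · exact absurd (by linear_combination h) hζn1
    · exact h
  have hφ7 : φ ((-(2 * m.nextCoeff) + 1) ^ 2) = ((-(2 * (φ m.nextCoeff)) + 1) : K) ^ 2 := by
    rw [map_pow, map_add, map_neg, map_mul, map_one, map_ofNat]
  rw [hφ7, hnext]
  rw [show φ (-7 : F) = (-7 : K) by rw [map_neg, map_ofNat]]
  linear_combination (8 : K) * hsumall + 4 * ζ * h7


/-- If `g ∈ GL_4(O_F)` has prime order `q`, where `O_F` is the ring of integers of an
imaginary quadratic field `F`, then `q ∈ {2,3,5,7}` if `F = ℚ(√-7)` and `q ∈ {2,3,5}`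
otherwise. -/
theorem prime_order_GL4_imaginary_quadratic
    (F : Type*) [Field F] [NumberField F] (h2 : Module.finrank ℚ F = 2)
    (himag : ∀ φ : F →+* ℝ, False)
    (g : GL (Fin 4) (𝓞 F)) (q : ℕ) (hq : q.Prime) (hg : orderOf g = q) :
    ((∃ x : F, x ^ 2 = -7) → q ∈ ({2, 3, 5, 7} : Set ℕ)) ∧
    ((¬ ∃ x : F, x ^ 2 = -7) → q ∈ ({2, 3, 5} : Set ℕ)) := by
  obtain ⟨ζ, hprim, hdeg⟩ := extract F g q hq hg
  have hb := bound_lemma F h2 hq.pos ζ hprim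
  have ht : Nat.totient q = q - 1 := Nat.totient_prime hq
  have h2q := hq.two_le
  have hqle : q ≤ 9 := by omega
  have hmem : q = 2 ∨ q = 3 ∨ q = 5 ∨ q = 7 := by
    interval_cases q <;> revert hq <;> decide
  constructor
  · intro _
    simp only [Set.mem_insert_iff, Set.mem_singleton_iff]
    tauto
  · intro hno
    have hq7 : q ≠ 7 := by
      intro h7
      subst h7
      exact hno (seven_lemma F h2 ζ hprim hdeg)
    simp only [Set.mem_insert_iff, Set.mem_singleton_iff]
    tauto
end
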